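/- For every seed set S ⊆ V, the worst-case expected number of influenced nodes outside S equals the value of the following linear program: min_θ∈Θ E_θ[R(c̃, S)] − |S| = min { Σ_{i ∈ V \ S} π_i : π : V → [0,1], π_i = 1 for all i ∈ S, and π_i − π_j ≤ 1 − p(i, j) for every edge (i, j) ∈ E }. -/

import Mathlib

open scoped BigOperators

namespace CorrIM

variable {V : Type*} [Fintype V] [DecidableEq V]

/-- A node `i` is influenced: `i ∈ S`, or `i` is reachable from some node of `S`
along the live edges of the scenario `c`. -/
def influenced (c : Finset (V × V)) (S : Finset V) (i : V) : Prop :=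
  ∃ s ∈ S, Relation.ReflTransGen (fun a b : V => (a, b) ∈ c) s i

/-- `R c S` : the number of influenced nodes in scenario `c` with seed set `S`. -/
noncomputable def R (c : Finset (V × V)) (S : Finset V) : ℕ :=
  Set.ncard {i : V | influenced c S i}

/-- The Fréchet class `Θ` : probability distributions on scenarios (subsets of `E`)
whose marginals agree with the edge likelihoods `p`. -/
def memTheta (E : Finset (V × V)) (p : V × V → ℝ) (θ : Finset (V × V) → ℝ) : Prop :=
  (∀ c, 0 ≤ θ c) ∧ (∀ c, θ c ≠ 0 → c ⊆ E) ∧ (∑ c : Finset (V × V), θ c) = 1 ∧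
    ∀ e ∈ E, (∑ c : Finset (V × V), if e ∈ c then θ c else 0) = p e

/-- Expected number of influenced nodes under the distribution `θ`. -/
noncomputable def expInf (θ : Finset (V × V) → ℝ) (S : Finset V) : ℝ :=
  ∑ c : Finset (V × V), θ c * (R c S : ℝ)

/-- The correlation robust influence function `f^corr`. -/
noncomputable def fcorr (E : Finset (V × V)) (p : V × V → ℝ) (S : Finset V) : ℝ :=
  sInf {x : ℝ | ∃ θ, memTheta E p θ ∧ x = expInf θ S}

open Classical in
/-- Probability of the event `A` under the distribution `θ`. -/
noncomputable def prob (θ : Finset (V × V) → ℝ) (A : Finset (V × V) → Prop) : ℝ :=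
  ∑ c : Finset (V × V), if A c then θ c else 0

/-- `γ` (a list of nodes `i₀, i₁, …, i_λ`, `λ ≥ 1`) is a directed path from the
seed set `S` to the node `i` using edges of `E`. -/
def IsPathFrom (E : Finset (V × V)) (S : Finset V) (i : V) (γ : List V) : Prop :=
  2 ≤ γ.length ∧ (∃ s ∈ S, γ.head? = some s) ∧ γ.getLast? = some i ∧
    γ.Chain' (fun a b : V => (a, b) ∈ E)

/-- The list of edges `(i₀,i₁), …, (i_{λ-1}, i_λ)` of a path `γ = [i₀, …, i_λ]`. -/
def pathEdges (γ : List V) : List (V × V) := γ.zip γ.tail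

/-- The weight `L(γ) = 1 - ∑_{l=1}^{λ} (1 - p(i_{l-1}, i_l))` of a path. -/
noncomputable def L (p : V × V → ℝ) (γ : List V) : ℝ :=
  1 - ((pathEdges γ).map (fun e => 1 - p e)).sum

/-- `π*_i = max(0, max_{γ ∈ Γ(S,i)} L(γ))`, with value `0` when `Γ(S,i) = ∅`. -/
noncomputable def piStar (E : Finset (V × V)) (p : V × V → ℝ) (S : Finset V) (i : V) : ℝ :=
  sSup (insert 0 {x : ℝ | ∃ γ : List V, IsPathFrom E S i γ ∧ x = L p γ})

/-- The independent cascade distribution `θ_ic` : each edge of `E` is live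
independently with probability `p e`. -/
noncomputable def thetaIC (E : Finset (V × V)) (p : V × V → ℝ) (c : Finset (V × V)) : ℝ :=
  if c ⊆ E then (∏ e ∈ c, p e) * ∏ e ∈ E \ c, (1 - p e) else 0

/-- The independent cascade influence function `f^ic`. -/
noncomputable def fic (E : Finset (V × V)) (p : V × V → ℝ) (S : Finset V) : ℝ :=
  expInf (thetaIC E p) S


/-- Feasibility for the linear program of Theorem 2:
`π : V → [0,1]`, `π i = 1` for `i ∈ S`, and `π i - π j ≤ 1 - p (i,j)` for `(i,j) ∈ E`. -/
def LPfeasible (E : Finset (V × V)) (p : V × V → ℝ) (S : Finset V) (x : V → ℝ) : Prop :=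
  (∀ i, 0 ≤ x i ∧ x i ≤ 1) ∧ (∀ i ∈ S, x i = 1) ∧ ∀ e ∈ E, x e.1 - x e.2 ≤ 1 - p e

set_option linter.unusedSectionVars false
set_option maxHeartbeats 1000000

lemma pathEdges_cons_cons (a b : V) (t : List V) :
    pathEdges (a :: b :: t) = (a, b) :: pathEdges (b :: t) := rfl

lemma chain'_cons' {Rr : V → V → Prop} {a b : V} {l : List V} :
    List.Chain' Rr (a :: b :: l) ↔ Rr a b ∧ List.Chain' Rr (b :: l) := List.isChain_cons_cons

lemma chain'_iff_pathEdges (Rr : V → V → Prop) :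
    ∀ γ : List V, γ.Chain' Rr ↔ ∀ e ∈ pathEdges γ, Rr e.1 e.2
  | [] => by simp [pathEdges, List.Chain']
  | [a] => by simp [pathEdges, List.Chain']
  | a :: b :: t => by
    rw [chain'_cons', pathEdges_cons_cons, chain'_iff_pathEdges Rr (b :: t)]
    simp

lemma pathEdges_append_last : ∀ (γ : List V) (i j : V), γ.getLast? = some i →
    pathEdges (γ ++ [j]) = pathEdges γ ++ [(i, j)]
  | [], i, j, h => by simp at h
  | [a], i, j, h => by simp at h; simp [pathEdges, h]
  | a :: b :: t, i, j, h => by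
    have := pathEdges_append_last (b :: t) i j (by simpa using h)
    simpa [pathEdges_cons_cons] using this

lemma reflTransGen_of_chain' (Rr : V → V → Prop) :
    ∀ (γ : List V) (s i : V), γ.head? = some s → γ.getLast? = some i →
      γ.Chain' Rr → Relation.ReflTransGen Rr s i
  | [], s, i, hs, hi, _ => by simp at hs
  | [a], s, i, hs, hi, _ => by
    simp at hs hi; subst hs; subst hi; exact Relation.ReflTransGen.refl
  | a :: b :: t, s, i, hs, hi, hc => by
    simp at hs; subst hs
    rw [chain'_cons'] at hc
    exact Relation.ReflTransGen.head hc.1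
      (reflTransGen_of_chain' Rr (b :: t) b i rfl (by simpa using hi) hc.2)

section Main
variable (E : Finset (V × V)) (p : V × V → ℝ) (S : Finset V)

/-- The set whose sup is piStar. -/
def Pset (i : V) : Set ℝ := insert 0 {x : ℝ | ∃ γ : List V, IsPathFrom E S i γ ∧ x = L p γ}

lemma piStar_def' (i : V) : piStar E p S i = sSup (Pset E p S i) := rfl

variable {E p S}

lemma L_le_one (hp : ∀ e ∈ E, 0 ≤ p e ∧ p e ≤ 1) {γ : List V}
    (hγ : γ.Chain' (fun a b : V => (a, b) ∈ E)) : L p γ ≤ 1 := by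
  have h : 0 ≤ ((pathEdges γ).map (fun e => 1 - p e)).sum := by
    apply List.sum_nonneg
    intro x hx
    simp only [List.mem_map] at hx
    obtain ⟨e, he, rfl⟩ := hx
    have := (hp e ((chain'_iff_pathEdges _ γ).1 hγ e he)).2
    linarith
  simp only [L]; linarith

lemma Pset_bddAbove (hp : ∀ e ∈ E, 0 ≤ p e ∧ p e ≤ 1) (i : V) :
    BddAbove (Pset E p S i) := by
  refine ⟨1, ?_⟩
  rintro x (rfl | ⟨γ, hγ, rfl⟩)
  · norm_num
  · exact L_le_one hp hγ.2.2.2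

lemma piStar_nonneg (hp : ∀ e ∈ E, 0 ≤ p e ∧ p e ≤ 1) (i : V) : 0 ≤ piStar E p S i :=
  le_csSup (Pset_bddAbove hp i) (Set.mem_insert _ _)

lemma piStar_le_one (hp : ∀ e ∈ E, 0 ≤ p e ∧ p e ≤ 1) (i : V) : piStar E p S i ≤ 1 := by
  apply csSup_le ⟨0, Set.mem_insert _ _⟩
  rintro x (rfl | ⟨γ, hγ, rfl⟩)
  · norm_num
  · exact L_le_one hp hγ.2.2.2

lemma L_mem_Pset {i : V} {γ : List V} (h : IsPathFrom E S i γ) : L p γ ∈ Pset E p S i :=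
  Set.mem_insert_iff.2 (Or.inr ⟨γ, h, rfl⟩)

lemma L_le_piStar (hp : ∀ e ∈ E, 0 ≤ p e ∧ p e ≤ 1) {i : V} {γ : List V}
    (h : IsPathFrom E S i γ) : L p γ ≤ piStar E p S i :=
  le_csSup (Pset_bddAbove hp i) (L_mem_Pset h)

/-- For LP feasible x, x decreases along paths. -/
lemma feas_along_path {x : V → ℝ} (hx : LPfeasible E p S x) :
    ∀ (γ : List V) (a b : V), γ.head? = some a → γ.getLast? = some b →
      γ.Chain' (fun a b : V => (a, b) ∈ E) →
      x a - ((pathEdges γ).map (fun e => 1 - p e)).sum ≤ x b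
  | [], a, b, ha, hb, hc => by simp at ha
  | [c], a, b, ha, hb, hc => by
    simp at ha hb; subst ha; subst hb; simp [pathEdges]
  | c :: d :: t, a, b, ha, hb, hc => by
    obtain rfl : c = a := by simpa using ha
    rw [chain'_cons'] at hc
    have ih := feas_along_path hx (d :: t) d b rfl (by simpa using hb) hc.2
    have hedge := hx.2.2 (c, d) hc.1
    rw [pathEdges_cons_cons]
    simp only [List.map_cons, List.sum_cons]
    simp only at hedge
    linarith

lemma piStar_le_feas (hp : ∀ e ∈ E, 0 ≤ p e ∧ p e ≤ 1) {x : V → ℝ}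
    (hx : LPfeasible E p S x) (i : V) : piStar E p S i ≤ x i := by
  apply csSup_le ⟨0, Set.mem_insert _ _⟩
  rintro y (rfl | ⟨γ, hγ, rfl⟩)
  · exact (hx.1 i).1
  · obtain ⟨hlen, ⟨s, hsS, hs⟩, hlast, hchain⟩ := hγ
    have := feas_along_path hx γ s i hs hlast hchain
    have hs1 := hx.2.1 s hsS
    simp only [L]
    linarith

end Main
section Main2
variable (E : Finset (V × V)) (p : V × V → ℝ) (S : Finset V)

noncomputable def piFix (i : V) : ℝ := if i ∈ S then 1 else piStar E p S i

variable {E p S}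

lemma piFix_of_not_mem {i : V} (h : i ∉ S) : piFix E p S i = piStar E p S i := if_neg h

lemma isPathFrom_pair {i j : V} (hi : i ∈ S) (he : (i, j) ∈ E) :
    IsPathFrom E S j [i, j] := by
  refine ⟨by norm_num, ⟨i, hi, rfl⟩, by simp, ?_⟩
  simp [List.Chain', he]

lemma L_pair {i j : V} : L p [i, j] = p (i, j) := by
  simp [L, pathEdges]

lemma isPathFrom_extend {i j : V} {γ : List V} (h : IsPathFrom E S i γ)
    (he : (i, j) ∈ E) : IsPathFrom E S j (γ ++ [j]) := by
  obtain ⟨hlen, ⟨s, hsS, hs⟩, hlast, hchain⟩ := h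
  refine ⟨by simp; omega, ⟨s, hsS, ?_⟩, by simp, ?_⟩
  · cases γ with
    | nil => simp at hs
    | cons a t => simpa using hs
  · refine List.IsChain.append hchain (by simp) ?_
    intro x hx y hy
    simp at hy
    rw [hlast] at hx
    simp at hx
    subst hx; subst hy; exact he

lemma L_extend {i j : V} {γ : List V} (hlast : γ.getLast? = some i) :
    L p (γ ++ [j]) = L p γ - (1 - p (i, j)) := by
  rw [L, L, pathEdges_append_last γ i j hlast]
  simp; ring

lemma piFix_feasible (hp : ∀ e ∈ E, 0 ≤ p e ∧ p e ≤ 1) :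
    LPfeasible E p S (piFix E p S) := by
  refine ⟨?_, ?_, ?_⟩
  · intro i
    by_cases h : i ∈ S
    · simp [piFix, h]
    · simp only [piFix, if_neg h]
      exact ⟨piStar_nonneg hp i, piStar_le_one hp i⟩
  · intro i hi; simp [piFix, hi]
  · rintro ⟨i, j⟩ he
    simp only
    have hpe := hp (i, j) he
    by_cases hi : i ∈ S
    · -- piFix i = 1, need p e ≤ piFix j
      rw [piFix, if_pos hi]
      by_cases hj : j ∈ S
      · rw [piFix, if_pos hj]; linarith [hpe.2]
      · rw [piFix, if_neg hj]
        have : p (i, j) ≤ piStar E p S j := by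
          have := L_le_piStar hp (isPathFrom_pair hi he)
          rwa [L_pair] at this
        linarith
    · rw [piFix, if_neg hi]
      by_cases hj : j ∈ S
      · rw [piFix, if_pos hj]
        have := piStar_le_one (S := S) hp i
        linarith [hpe.2]
      · rw [piFix, if_neg hj]
        -- piStar i ≤ piStar j + (1 - p e)
        have key : piStar E p S i ≤ piStar E p S j + (1 - p (i, j)) := by
          apply csSup_le ⟨0, Set.mem_insert _ _⟩
          rintro y (rfl | ⟨γ, hγ, rfl⟩)
          · have := piStar_nonneg (S := S) hp j
            linarith [hpe.2]
          · have hext := L_le_piStar hp (isPathFrom_extend hγ he)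
            rw [L_extend hγ.2.2.1] at hext
            linarith
        linarith
end Main2
section Prob
variable {E : Finset (V × V)} {p : V × V → ℝ} {S : Finset V} {θ : Finset (V × V) → ℝ}

open Classical in
lemma R_cast_eq_sum (c : Finset (V × V)) (S : Finset V) :
    (R c S : ℝ) = ∑ i : V, if influenced c S i then (1 : ℝ) else 0 := by
  classical
  rw [R, Set.ncard_eq_toFinset_card']
  rw [Finset.sum_boole]
  simp [Set.toFinset_setOf]

open Classical in
lemma expInf_eq_sum_prob (θ : Finset (V × V) → ℝ) (S : Finset V) :
    expInf θ S = ∑ i : V, prob θ (fun c => influenced c S i) := by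
  classical
  rw [expInf]
  simp_rw [R_cast_eq_sum, Finset.mul_sum, prob]
  rw [Finset.sum_comm]
  congr 1; funext i; congr 1; funext c
  by_cases h : influenced c S i <;> simp [h]

lemma prob_nonneg (hθ : memTheta E p θ) (A : Finset (V × V) → Prop) : 0 ≤ prob θ A := by
  classical
  apply Finset.sum_nonneg
  intro c _
  by_cases h : A c <;> simp [h, hθ.1 c]

lemma prob_mono (hθ : memTheta E p θ) {A B : Finset (V × V) → Prop}
    (h : ∀ c, A c → B c) : prob θ A ≤ prob θ B := by
  classical
  apply Finset.sum_le_sum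
  intro c _
  by_cases hA : A c
  · simp [hA, h c hA]
  · by_cases hB : B c <;> simp [hA, hB, hθ.1 c]

lemma prob_or_le (hθ : memTheta E p θ) (A B : Finset (V × V) → Prop) :
    prob θ (fun c => A c ∨ B c) ≤ prob θ A + prob θ B := by
  classical
  rw [prob, prob, prob, ← Finset.sum_add_distrib]
  apply Finset.sum_le_sum
  intro c _
  by_cases hA : A c <;> by_cases hB : B c <;> simp [hA, hB, hθ.1 c]

lemma prob_add_compl (hθ : memTheta E p θ) (A : Finset (V × V) → Prop) :
    prob θ A + prob θ (fun c => ¬ A c) = 1 := by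
  classical
  rw [prob, prob, ← Finset.sum_add_distrib]
  rw [← hθ.2.2.1]
  apply Finset.sum_congr rfl
  intro c _
  by_cases hA : A c <;> simp [hA]

lemma prob_mem (hθ : memTheta E p θ) {e : V × V} (he : e ∈ E) :
    prob θ (fun c => e ∈ c) = p e := by
  classical
  rw [← hθ.2.2.2 e he, prob]
  exact Finset.sum_congr rfl fun c _ => by by_cases h : e ∈ c <;> simp [h]

lemma prob_not_mem (hθ : memTheta E p θ) {e : V × V} (he : e ∈ E) :
    prob θ (fun c => e ∉ c) = 1 - p e := by
  have h1 := prob_add_compl hθ (fun c => e ∈ c)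
  have h2 := prob_mem hθ he
  linarith

lemma prob_union_bound (hθ : memTheta E p θ) :
    ∀ l : List (V × V), (∀ e ∈ l, e ∈ E) →
      prob θ (fun c => ∃ e ∈ l, e ∉ c) ≤ (l.map (fun e => 1 - p e)).sum
  | [], _ => by
    simp only [List.not_mem_nil, false_and, exists_false, List.map_nil, List.sum_nil]
    have : prob θ (fun c => ∃ e ∈ ([] : List (V × V)), e ∉ c) = 0 := by
      classical
      rw [prob]
      apply Finset.sum_eq_zero
      intro c _
      simp
    simp at this ⊢
    rw [this]
  | a :: l, hl => by
    have h1 : prob θ (fun c => ∃ e ∈ a :: l, e ∉ c) ≤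
        prob θ (fun c => a ∉ c) + prob θ (fun c => ∃ e ∈ l, e ∉ c) := by
      refine le_trans (prob_mono hθ ?_) (prob_or_le hθ _ _)
      rintro c ⟨e, he, hec⟩
      rcases List.mem_cons.1 he with rfl | he'
      · exact Or.inl hec
      · exact Or.inr ⟨e, he', hec⟩
    have h2 := prob_union_bound hθ l (fun e he => hl e (List.mem_cons_of_mem a he))
    have h3 := prob_not_mem hθ (hl a List.mem_cons_self)
    simp only [List.map_cons, List.sum_cons]
    linarith

lemma prob_influenced_ge_L (hθ : memTheta E p θ) {i : V} {γ : List V}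
    (hγ : IsPathFrom E S i γ) : L p γ ≤ prob θ (fun c => influenced c S i) := by
  obtain ⟨hlen, ⟨s, hsS, hs⟩, hlast, hchain⟩ := hγ
  have hedges : ∀ e ∈ pathEdges γ, e ∈ E := (chain'_iff_pathEdges _ γ).1 hchain
  have himp : ∀ c : Finset (V × V), (∀ e ∈ pathEdges γ, e ∈ c) → influenced c S i := by
    intro c hc
    exact ⟨s, hsS, reflTransGen_of_chain' _ γ s i hs hlast
      ((chain'_iff_pathEdges (fun a b => (a, b) ∈ c) γ).2 hc)⟩
  have h1 : prob θ (fun c => ∀ e ∈ pathEdges γ, e ∈ c) ≤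
      prob θ (fun c => influenced c S i) := prob_mono hθ (fun c => himp c)
  have h2 := prob_add_compl hθ (fun c => ∀ e ∈ pathEdges γ, e ∈ c)
  have h3 : prob θ (fun c => ¬ ∀ e ∈ pathEdges γ, e ∈ c) ≤
      ((pathEdges γ).map (fun e => 1 - p e)).sum := by
    refine le_trans (le_of_eq ?_) (prob_union_bound hθ (pathEdges γ) hedges)
    congr 1; funext c
    simp
  rw [L]
  linarith

lemma prob_influenced_ge_piStar (hp : ∀ e ∈ E, 0 ≤ p e ∧ p e ≤ 1)
    (hθ : memTheta E p θ) (i : V) :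
    piStar E p S i ≤ prob θ (fun c => influenced c S i) := by
  apply csSup_le ⟨0, Set.mem_insert _ _⟩
  rintro y (rfl | ⟨γ, hγ, rfl⟩)
  · exact prob_nonneg hθ _
  · exact prob_influenced_ge_L hθ hγ

lemma prob_influenced_of_mem (hθ : memTheta E p θ) {i : V} (hi : i ∈ S) :
    prob θ (fun c => influenced c S i) = 1 := by
  classical
  rw [prob, ← hθ.2.2.1]
  apply Finset.sum_congr rfl
  intro c _
  have : influenced c S i := ⟨i, hi, Relation.ReflTransGen.refl⟩
  simp [this]

/-- Weak duality: every θ ∈ Θ has expected influence at least |S| + ∑ piStar. -/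
lemma expInf_ge (hp : ∀ e ∈ E, 0 ≤ p e ∧ p e ≤ 1) (hθ : memTheta E p θ) :
    (S.card : ℝ) + ∑ i ∈ Finset.univ \ S, piStar E p S i ≤ expInf θ S := by
  rw [expInf_eq_sum_prob]
  rw [← Finset.sum_sdiff (Finset.subset_univ S)]
  have h1 : ∑ i ∈ S, prob θ (fun c => influenced c S i) = (S.card : ℝ) := by
    rw [Finset.sum_congr rfl (fun i hi => prob_influenced_of_mem hθ hi)]
    simp
  rw [h1]
  have h2 : ∑ i ∈ Finset.univ \ S, piStar E p S i ≤
      ∑ i ∈ Finset.univ \ S, prob θ (fun c => influenced c S i) :=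
    Finset.sum_le_sum (fun i _ => prob_influenced_ge_piStar hp hθ i)
  linarith

end Prob
section Construction
open MeasureTheory

variable (E : Finset (V × V)) (p : V × V → ℝ) (S : Finset V)

/-- The set of u ∈ [0,1) for which edge e is live in the coupled construction. -/
noncomputable def liveSet (e : V × V) : Set ℝ :=
  Set.Ico 0 (piFix E p S e.1 + p e - 1) ∪
    Set.Ico (piFix E p S e.1) (piFix E p S e.1 + p e)

open Classical in
/-- The scenario determined by u. -/
noncomputable def cOf (u : ℝ) : Finset (V × V) := E.filter (fun e => u ∈ liveSet E p S e)

/-- The set of u yielding scenario c. -/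
def level (c : Finset (V × V)) : Set ℝ := {u ∈ Set.Ico (0:ℝ) 1 | cOf E p S u = c}

/-- The worst-case distribution. -/
noncomputable def thetaStar (c : Finset (V × V)) : ℝ := (volume (level E p S c)).toReal

variable {E p S}

lemma measurableSet_liveSet (e : V × V) : MeasurableSet (liveSet E p S e) :=
  measurableSet_Ico.union measurableSet_Ico

open Classical in
lemma mem_cOf {u : ℝ} {e : V × V} : e ∈ cOf E p S u ↔ e ∈ E ∧ u ∈ liveSet E p S e := by
  rw [cOf]; exact Finset.mem_filter

lemma cOf_subset (u : ℝ) : cOf E p S u ⊆ E := fun e he => (mem_cOf.1 he).1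

lemma measurableSet_level (c : Finset (V × V)) : MeasurableSet (level E p S c) := by
  classical
  by_cases hc : c ⊆ E
  · have : level E p S c =
        Set.Ico (0:ℝ) 1 ∩ ⋂ e ∈ E, {u : ℝ | u ∈ liveSet E p S e ↔ e ∈ c} := by
      ext u
      simp only [level, Set.mem_setOf_eq, Set.mem_inter_iff, Set.mem_iInter]
      constructor
      · rintro ⟨hu, rfl⟩
        refine ⟨hu, fun e he => ?_⟩
        rw [mem_cOf]; simp [he]
      · rintro ⟨hu, h⟩
        refine ⟨hu, ?_⟩
        ext e
        rw [mem_cOf]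
        constructor
        · rintro ⟨heE, hl⟩; exact (h e heE).1 hl
        · intro hec
          have heE := hc hec
          exact ⟨heE, (h e heE).2 hec⟩
    rw [this]
    refine measurableSet_Ico.inter (MeasurableSet.biInter (Set.to_countable _) ?_)
    intro e _
    by_cases hec : e ∈ c
    · have : {u : ℝ | u ∈ liveSet E p S e ↔ e ∈ c} = liveSet E p S e := by
        ext u; simp [hec]
      rw [this]; exact measurableSet_liveSet e
    · have : {u : ℝ | u ∈ liveSet E p S e ↔ e ∈ c} = (liveSet E p S e)ᶜ := by
        ext u; simp [hec]
      rw [this]; exact (measurableSet_liveSet e).compl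
  · have : level E p S c = ∅ := by
      ext u
      simp only [level, Set.mem_setOf_eq, Set.mem_empty_iff_false, iff_false, not_and]
      intro _ h
      exact hc (h ▸ cOf_subset u)
    rw [this]; exact MeasurableSet.empty

lemma level_disjoint : ∀ c c' : Finset (V × V), c ≠ c' →
    Disjoint (level E p S c) (level E p S c') := by
  intro c c' hne
  rw [Set.disjoint_left]
  rintro u ⟨_, rfl⟩ ⟨_, h2⟩
  exact hne h2

lemma level_ne_top (c : Finset (V × V)) : volume (level E p S c) ≠ ⊤ := by
  have : volume (level E p S c) ≤ volume (Set.Ico (0:ℝ) 1) :=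
    measure_mono (fun u hu => hu.1)
  rw [Real.volume_Ico] at this
  exact (lt_of_le_of_lt this (by norm_num)).ne

open Classical in
/-- Key computation: probabilities of events under thetaStar as volumes. -/
lemma thetaStar_event (A : Finset (V × V) → Prop) :
    (∑ c : Finset (V × V), if A c then thetaStar E p S c else 0) =
      (volume {u ∈ Set.Ico (0:ℝ) 1 | A (cOf E p S u)}).toReal := by
  classical
  have hset : {u ∈ Set.Ico (0:ℝ) 1 | A (cOf E p S u)} =
      ⋃ c ∈ Finset.univ.filter A, level E p S c := by
    ext u
    simp only [Set.mem_setOf_eq, Set.mem_iUnion, Finset.mem_filter, Finset.mem_univ,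
      true_and, level]
    constructor
    · rintro ⟨hu, hA⟩; exact ⟨cOf E p S u, hA, hu, rfl⟩
    · rintro ⟨c, hA, hu, rfl⟩; exact ⟨hu, hA⟩
  rw [hset, measure_biUnion_finset ?hd (fun c _ => measurableSet_level c)]
  · rw [ENNReal.toReal_sum (fun c _ => level_ne_top c)]
    rw [Finset.sum_filter]
    rfl
  case hd =>
    intro c hc c' hc' hne
    exact level_disjoint c c' hne

end Construction
section Construction2
open MeasureTheory

variable {E : Finset (V × V)} {p : V × V → ℝ} {S : Finset V}

lemma thetaStar_nonneg (c : Finset (V × V)) : 0 ≤ thetaStar E p S c :=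
  ENNReal.toReal_nonneg

lemma thetaStar_support {c : Finset (V × V)} (h : thetaStar E p S c ≠ 0) : c ⊆ E := by
  by_contra hc
  apply h
  have : level E p S c = ∅ := by
    ext u
    simp only [level, Set.mem_setOf_eq, Set.mem_empty_iff_false, iff_false, not_and]
    intro _ h2
    exact hc (h2 ▸ cOf_subset u)
  rw [thetaStar, this]
  simp

lemma thetaStar_sum : (∑ c : Finset (V × V), thetaStar E p S c) = 1 := by
  classical
  have := thetaStar_event (E := E) (p := p) (S := S) (fun _ => True)
  simp only [if_true] at this
  rw [this]
  have h2 : {u : ℝ | u ∈ Set.Ico (0:ℝ) 1 ∧ True} = Set.Ico (0:ℝ) 1 := by ext u; simp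
  rw [h2, Real.volume_Ico]
  norm_num

lemma thetaStar_marginal (hp : ∀ e ∈ E, 0 ≤ p e ∧ p e ≤ 1) {e : V × V} (he : e ∈ E) :
    (∑ c : Finset (V × V), if e ∈ c then thetaStar E p S c else 0) = p e := by
  classical
  have hconv : (∑ c : Finset (V × V), if e ∈ c then thetaStar E p S c else 0) =
      (volume {u ∈ Set.Ico (0:ℝ) 1 | e ∈ cOf E p S u}).toReal := by
    rw [← thetaStar_event (fun c => e ∈ c)]
    exact Finset.sum_congr rfl fun c _ => by by_cases h : e ∈ c <;> simp [h]
  rw [hconv]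
  set a := piFix E p S e.1 with ha
  set q := p e with hq
  have hfeas := piFix_feasible (S := S) hp
  have ha0 : 0 ≤ a := (hfeas.1 e.1).1
  have ha1 : a ≤ 1 := (hfeas.1 e.1).2
  have hq0 : 0 ≤ q := (hp e he).1
  have hq1 : q ≤ 1 := (hp e he).2
  have hset : {u ∈ Set.Ico (0:ℝ) 1 | e ∈ cOf E p S u} =
      Set.Ico 0 (a + q - 1) ∪ Set.Ico a (min (a + q) 1) := by
    ext u
    simp only [Set.mem_setOf_eq, Set.mem_Ico, Set.mem_union, mem_cOf, liveSet, ← ha, ← hq]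
    constructor
    · rintro ⟨⟨hu0, hu1⟩, _, (⟨h1, h2⟩ | ⟨h1, h2⟩)⟩
      · exact Or.inl ⟨hu0, h2⟩
      · exact Or.inr ⟨h1, lt_min h2 hu1⟩
    · rintro (⟨h1, h2⟩ | ⟨h1, h2⟩)
      · exact ⟨⟨h1, by linarith⟩, he, Or.inl ⟨h1, h2⟩⟩
      · have h2' := lt_min_iff.1 h2
        exact ⟨⟨by linarith, h2'.2⟩, he, Or.inr ⟨h1, h2'.1⟩⟩
  rw [hset]
  have hdisj : Disjoint (Set.Ico (0:ℝ) (a + q - 1)) (Set.Ico a (min (a + q) 1)) := by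
    rw [Set.disjoint_left]
    rintro u ⟨_, hu2⟩ ⟨hu3, _⟩
    linarith
  rw [measure_union hdisj measurableSet_Ico, Real.volume_Ico, Real.volume_Ico, sub_zero]
  by_cases hcase : a + q ≤ 1
  · rw [min_eq_left hcase, show a + q - a = q from by ring]
    have h1 : ENNReal.ofReal (a + q - 1) = 0 := ENNReal.ofReal_eq_zero.2 (by linarith)
    rw [h1, zero_add]
    rw [ENNReal.toReal_ofReal (by linarith)]
  · rw [min_eq_right (by linarith)]
    rw [ENNReal.toReal_add ENNReal.ofReal_ne_top ENNReal.ofReal_ne_top,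
      ENNReal.toReal_ofReal (by linarith), ENNReal.toReal_ofReal (by linarith)]
    ring

lemma thetaStar_memTheta (hp : ∀ e ∈ E, 0 ≤ p e ∧ p e ≤ 1) :
    memTheta E p (thetaStar E p S) :=
  ⟨thetaStar_nonneg, fun _ h => thetaStar_support h, thetaStar_sum,
    fun _ he => thetaStar_marginal hp he⟩

lemma propagate (hp : ∀ e ∈ E, 0 ≤ p e ∧ p e ≤ 1) {u : ℝ} {a b : V}
    (hlt : u < piFix E p S a) (h : (a, b) ∈ cOf E p S u) : u < piFix E p S b := by
  obtain ⟨hE, hl⟩ := mem_cOf.1 h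
  have hfeas := (piFix_feasible (S := S) hp).2.2 (a, b) hE
  simp only at hfeas
  rcases hl with ⟨_, h2⟩ | ⟨h1, _⟩
  · simp only [liveSet] at *
    linarith
  · simp only at h1
    linarith

lemma influenced_cOf_lt (hp : ∀ e ∈ E, 0 ≤ p e ∧ p e ≤ 1) {u : ℝ} {i : V}
    (hu : u ∈ Set.Ico (0:ℝ) 1) (h : influenced (cOf E p S u) S i) :
    u < piFix E p S i := by
  obtain ⟨s, hs, hrt⟩ := h
  induction hrt with
  | refl => rw [piFix, if_pos hs]; exact hu.2
  | tail _ hbc ih => exact propagate hp ih hbc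

open Classical in
lemma prob_thetaStar_le (hp : ∀ e ∈ E, 0 ≤ p e ∧ p e ≤ 1) (i : V) :
    prob (thetaStar E p S) (fun c => influenced c S i) ≤ piFix E p S i := by
  rw [prob, thetaStar_event (fun c => influenced c S i)]
  have hsub : {u ∈ Set.Ico (0:ℝ) 1 | influenced (cOf E p S u) S i} ⊆
      Set.Ico 0 (piFix E p S i) := by
    rintro u ⟨hu, hinf⟩
    exact ⟨hu.1, influenced_cOf_lt hp hu hinf⟩
  calc (volume {u ∈ Set.Ico (0:ℝ) 1 | influenced (cOf E p S u) S i}).toReal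
      ≤ (volume (Set.Ico 0 (piFix E p S i))).toReal := by
        apply ENNReal.toReal_mono
        · rw [Real.volume_Ico]; exact ENNReal.ofReal_ne_top
        · exact measure_mono hsub
    _ = piFix E p S i := by
        rw [Real.volume_Ico, sub_zero,
          ENNReal.toReal_ofReal ((piFix_feasible (S := S) hp).1 i).1]

lemma expInf_thetaStar_le (hp : ∀ e ∈ E, 0 ≤ p e ∧ p e ≤ 1) :
    expInf (thetaStar E p S) S ≤ (S.card : ℝ) + ∑ i ∈ Finset.univ \ S, piStar E p S i := by
  rw [expInf_eq_sum_prob]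
  have h1 : ∑ i : V, prob (thetaStar E p S) (fun c => influenced c S i) ≤
      ∑ i : V, piFix E p S i :=
    Finset.sum_le_sum fun i _ => prob_thetaStar_le hp i
  have h2 : ∑ i : V, piFix E p S i =
      (S.card : ℝ) + ∑ i ∈ Finset.univ \ S, piStar E p S i := by
    rw [← Finset.sum_sdiff (Finset.subset_univ S)]
    have hS : ∑ i ∈ S, piFix E p S i = (S.card : ℝ) := by
      rw [Finset.sum_congr rfl (fun i hi => show piFix E p S i = 1 from if_pos hi)]
      simp
    have hSc : ∑ i ∈ Finset.univ \ S, piFix E p S i =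
        ∑ i ∈ Finset.univ \ S, piStar E p S i :=
      Finset.sum_congr rfl fun i hi =>
        piFix_of_not_mem (Finset.mem_sdiff.1 hi).2
    rw [hS, hSc]; ring
  linarith

end Construction2
/-- `min_{θ ∈ Θ} E_θ[R(c̃, S)] - |S|` equals the value of the linear
program `min { ∑_{i ∈ V \ S} π_i : π LP-feasible }`. -/
theorem fcorr_eq_LP (E : Finset (V × V)) (p : V × V → ℝ)
    (hp : ∀ e ∈ E, 0 ≤ p e ∧ p e ≤ 1) (S : Finset V) :
    fcorr E p S - (S.card : ℝ) =
      sInf {y : ℝ | ∃ x : V → ℝ, LPfeasible E p S x ∧ y = ∑ i ∈ Finset.univ \ S, x i} := by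
  have hfeas := piFix_feasible (S := S) hp
  set v := ∑ i ∈ Finset.univ \ S, piStar E p S i with hv
  have hmemθ := thetaStar_memTheta (S := S) hp
  have hexp_eq : expInf (thetaStar E p S) S = (S.card : ℝ) + v :=
    le_antisymm (expInf_thetaStar_le hp) (expInf_ge hp hmemθ)
  have hmemf : ((S.card : ℝ) + v) ∈ {x : ℝ | ∃ θ, memTheta E p θ ∧ x = expInf θ S} :=
    ⟨thetaStar E p S, hmemθ, hexp_eq.symm⟩
  have hfcorr : fcorr E p S = (S.card : ℝ) + v := by
    rw [fcorr]
    apply le_antisymm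
    · refine csInf_le ⟨(S.card : ℝ) + v, ?_⟩ hmemf
      rintro x ⟨θ, hθ, rfl⟩
      exact expInf_ge hp hθ
    · refine le_csInf ⟨_, hmemf⟩ ?_
      rintro x ⟨θ, hθ, rfl⟩
      exact expInf_ge hp hθ
  have hsum : v = ∑ i ∈ Finset.univ \ S, piFix E p S i :=
    Finset.sum_congr rfl fun i hi =>
      (piFix_of_not_mem (Finset.mem_sdiff.1 hi).2).symm
  have hmemLP : v ∈ {y : ℝ | ∃ x : V → ℝ, LPfeasible E p S x ∧
      y = ∑ i ∈ Finset.univ \ S, x i} := ⟨piFix E p S, hfeas, hsum⟩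
  have hlb : ∀ y ∈ {y : ℝ | ∃ x : V → ℝ, LPfeasible E p S x ∧
      y = ∑ i ∈ Finset.univ \ S, x i}, v ≤ y := by
    rintro y ⟨x, hx, rfl⟩
    exact Finset.sum_le_sum fun i _ => piStar_le_feas hp hx i
  have hLP : sInf {y : ℝ | ∃ x : V → ℝ, LPfeasible E p S x ∧
      y = ∑ i ∈ Finset.univ \ S, x i} = v :=
    le_antisymm (csInf_le ⟨v, hlb⟩ hmemLP) (le_csInf ⟨v, hmemLP⟩ hlb)
  rw [hfcorr, hLP]
  ring

end CorrIM
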